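/- Let C = {c ∈ F_{q²}* : c^{q+1} = 1} be the kernel of the norm map from F_{q²} to F_q, with q an odd prime power. Then for every c ∈ C with c ≠ 1, one has ((c-1)²/c)^{(q-1)/2} = −c^{(q+1)/2} in F_{q²}. -/

import Mathlib

/-- For `c` in the norm-one subgroup of `F_{q²}*`, `c ≠ 1`, one has
`((c-1)²/c)^((q-1)/2) = -c^((q+1)/2)` in `F_{q²}`. -/
theorem stmt_7 (q : ℕ) (hq : IsPrimePow q) (hodd : Odd q)
    (F : Type*) [Field F] [Fintype F] (hcard : Fintype.card F = q ^ 2)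
    (c : F) (hc : c ^ (q + 1) = 1) (hne : c ≠ 1) :
    ((c - 1) ^ 2 / c) ^ ((q - 1) / 2) = -c ^ ((q + 1) / 2) := by
  obtain ⟨p, n, hp, hn, rfl⟩ := hq
  have hpp : p.Prime := hp.nat_prime
  haveI : Fact p.Prime := ⟨hpp⟩
  -- characteristic is p
  have hdvd : p ∣ Fintype.card F := by
    rw [hcard]
    exact dvd_pow (dvd_pow_self p hn.ne') (by norm_num)
  have hrp : ringChar F = p := by
    have h1 := (prime_dvd_char_iff_dvd_card p).mpr hdvd
    have h2 : (ringChar F).Prime := CharP.char_is_prime F _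
    exact ((Nat.prime_dvd_prime_iff_eq hpp h2).mp h1).symm
  haveI hcharp : CharP F p := hrp ▸ ringChar.charP F
  set q := p ^ n with hqdef
  have hc0 : c ≠ 0 := by
    intro h; rw [h, zero_pow (Nat.succ_ne_zero q)] at hc; exact zero_ne_one hc
  have hc1 : c - 1 ≠ 0 := sub_ne_zero.mpr hne
  obtain ⟨k, hk⟩ := hodd
  have hq1 : (q - 1) / 2 = k := by omega
  have hq2 : (q + 1) / 2 = k + 1 := by omega
  -- Frobenius: (c-1)^q = c^q - 1
  have hfrob : (c - 1) ^ q = c ^ q - 1 := by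
    rw [hqdef, sub_pow_char_pow, one_pow]
  have hcq : c ^ q = c⁻¹ := by
    field_simp
    rw [← pow_succ]; exact hc
  -- (c-1)^(q-1) = -c⁻¹
  have hkey : (c - 1) ^ (2 * k) = -c⁻¹ := by
    have h : (c - 1) ^ (2 * k) * (c - 1) = (c - 1) ^ q := by
      rw [← pow_succ]; congr 1; omega
    rw [hfrob, hcq] at h
    have h2 : (-c⁻¹) * (c - 1) = c⁻¹ - 1 := by field_simp; ring
    exact mul_right_cancel₀ hc1 (h.trans h2.symm)
  -- square root of 1
  have hsq : (c ^ (k + 1)) ^ 2 = 1 := by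
    rw [← pow_mul]
    have : (k + 1) * 2 = q + 1 := by omega
    rw [this, hc]
  have hinv : (c ^ (k + 1))⁻¹ = c ^ (k + 1) :=
    inv_eq_of_mul_eq_one_right (by rw [← pow_two]; exact hsq)
  rw [hq1, hq2, div_pow, ← pow_mul, hkey, neg_div, neg_inj,
    div_eq_iff (pow_ne_zero k hc0), ← pow_add, show k + 1 + k = q by omega]
  exact hcq.symm
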